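/- Consider the ODE system for n×n complex matrices: A₀' = ½[A₀,A₁²] + ½[A₀²,A₂], A₂' = ½[A₀,A₂²] + ½[A₁²,A₂], A₁' = A₀A₁A₂ − A₂A₁A₀ + ½(A₀A₂A₁ − A₁A₂A₀ + A₁A₀A₂ − A₂A₀A₁). This system preserves the reality conditions A₀* = −A₂ and A₁* = A₁: if (A₀,A₁,A₂) solves the system, then so does (−A₂*, A₁*, −A₀*). -/

import Mathlib

open Matrix

lemma deriv_star' (f : ℝ → ℂ) (s : ℝ) :
    deriv (fun t => star (f t)) s = star (deriv f s) := by
  by_cases h : DifferentiableAt ℝ f s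
  · exact ((Complex.conjCLE.hasFDerivAt.comp_hasDerivAt s h.hasDerivAt).deriv)
  · rw [deriv_zero_of_not_differentiableAt h, deriv_zero_of_not_differentiableAt, star_zero]
    intro hc
    apply h
    have : f = fun t => star (star (f t)) := by ext t; simp
    rw [this]
    exact Complex.conjCLE.differentiableAt.comp s hc

/-- The matrix ODE system preserves the reality conditions A₀* = −A₂, A₁* = A₁:
if (A₀,A₁,A₂) solves the system, so does (−A₂ᴴ, A₁ᴴ, −A₀ᴴ). -/
theorem stmt_18 (n : ℕ) (A₀ A₁ A₂ : ℝ → Matrix (Fin n) (Fin n) ℂ)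
    (h0 : ∀ s i j, deriv (fun t => A₀ t i j) s
      = ((1/2 : ℂ) • (A₀ s * (A₁ s)^2 - (A₁ s)^2 * A₀ s)
          + (1/2 : ℂ) • ((A₀ s)^2 * A₂ s - A₂ s * (A₀ s)^2)) i j)
    (h2 : ∀ s i j, deriv (fun t => A₂ t i j) s
      = ((1/2 : ℂ) • (A₀ s * (A₂ s)^2 - (A₂ s)^2 * A₀ s)
          + (1/2 : ℂ) • ((A₁ s)^2 * A₂ s - A₂ s * (A₁ s)^2)) i j)
    (h1 : ∀ s i j, deriv (fun t => A₁ t i j) s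
      = (A₀ s * A₁ s * A₂ s - A₂ s * A₁ s * A₀ s
          + (1/2 : ℂ) • (A₀ s * A₂ s * A₁ s - A₁ s * A₂ s * A₀ s
              + A₁ s * A₀ s * A₂ s - A₂ s * A₀ s * A₁ s)) i j) :
    (∀ s i j, deriv (fun t => (-(A₂ t)ᴴ) i j) s
      = (((1/2 : ℂ) • ((-(A₂ s)ᴴ) * ((A₁ s)ᴴ)^2 - ((A₁ s)ᴴ)^2 * (-(A₂ s)ᴴ))
          + (1/2 : ℂ) • ((-(A₂ s)ᴴ)^2 * (-(A₀ s)ᴴ) - (-(A₀ s)ᴴ) * (-(A₂ s)ᴴ)^2)) i j)) ∧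
    (∀ s i j, deriv (fun t => (-(A₀ t)ᴴ) i j) s
      = (((1/2 : ℂ) • ((-(A₂ s)ᴴ) * ((-(A₀ s)ᴴ))^2 - ((-(A₀ s)ᴴ))^2 * (-(A₂ s)ᴴ))
          + (1/2 : ℂ) • (((A₁ s)ᴴ)^2 * (-(A₀ s)ᴴ) - (-(A₀ s)ᴴ) * ((A₁ s)ᴴ)^2)) i j)) ∧
    (∀ s i j, deriv (fun t => ((A₁ t)ᴴ) i j) s
      = (((-(A₂ s)ᴴ) * (A₁ s)ᴴ * (-(A₀ s)ᴴ) - (-(A₀ s)ᴴ) * (A₁ s)ᴴ * (-(A₂ s)ᴴ)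
          + (1/2 : ℂ) • ((-(A₂ s)ᴴ) * (-(A₀ s)ᴴ) * (A₁ s)ᴴ
              - (A₁ s)ᴴ * (-(A₀ s)ᴴ) * (-(A₂ s)ᴴ)
              + (A₁ s)ᴴ * (-(A₂ s)ᴴ) * (-(A₀ s)ᴴ)
              - (-(A₀ s)ᴴ) * (-(A₂ s)ᴴ) * (A₁ s)ᴴ)) i j)) := by
  have entry : ∀ (B : ℝ → Matrix (Fin n) (Fin n) ℂ) (s : ℝ) (i j : Fin n),
      deriv (fun t => (-(B t)ᴴ) i j) s = - star (deriv (fun t => B t j i) s) := by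
    intro B s i j
    have : (fun t => (-(B t)ᴴ) i j) = fun t => -(star (B t j i)) := by
      funext t; simp [conjTranspose_apply]
    rw [this, deriv.fun_neg, deriv_star']
  have entry' : ∀ (B : ℝ → Matrix (Fin n) (Fin n) ℂ) (s : ℝ) (i j : Fin n),
      deriv (fun t => ((B t)ᴴ) i j) s = star (deriv (fun t => B t j i) s) := by
    intro B s i j
    have : (fun t => ((B t)ᴴ) i j) = fun t => (star (B t j i)) := by
      funext t; simp [conjTranspose_apply]
    rw [this, deriv_star']
  refine ⟨?_, ?_, ?_⟩
  · intro s i j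
    rw [entry, h2 s j i]
    have hm : -(((1/2 : ℂ) • (A₀ s * (A₂ s)^2 - (A₂ s)^2 * A₀ s)
          + (1/2 : ℂ) • ((A₁ s)^2 * A₂ s - A₂ s * (A₁ s)^2))ᴴ)
        = ((1/2 : ℂ) • ((-(A₂ s)ᴴ) * ((A₁ s)ᴴ)^2 - ((A₁ s)ᴴ)^2 * (-(A₂ s)ᴴ))
          + (1/2 : ℂ) • ((-(A₂ s)ᴴ)^2 * (-(A₀ s)ᴴ) - (-(A₀ s)ᴴ) * (-(A₂ s)ᴴ)^2)) := by
      simp only [conjTranspose_add, conjTranspose_smul, conjTranspose_sub,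
        conjTranspose_mul, conjTranspose_pow, star_div₀, star_one, star_ofNat, neg_add, neg_sub, smul_sub, smul_add, smul_neg]
      noncomm_ring
      module
    rw [← hm]
    simp only [Matrix.neg_apply, conjTranspose_apply]
  · intro s i j
    rw [entry, h0 s j i]
    have hm : -(((1/2 : ℂ) • (A₀ s * (A₁ s)^2 - (A₁ s)^2 * A₀ s)
          + (1/2 : ℂ) • ((A₀ s)^2 * A₂ s - A₂ s * (A₀ s)^2))ᴴ)
        = ((1/2 : ℂ) • ((-(A₂ s)ᴴ) * ((-(A₀ s)ᴴ))^2 - ((-(A₀ s)ᴴ))^2 * (-(A₂ s)ᴴ))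
          + (1/2 : ℂ) • (((A₁ s)ᴴ)^2 * (-(A₀ s)ᴴ) - (-(A₀ s)ᴴ) * ((A₁ s)ᴴ)^2)) := by
      simp only [conjTranspose_add, conjTranspose_smul, conjTranspose_sub,
        conjTranspose_mul, conjTranspose_pow, star_div₀, star_one, star_ofNat, neg_add, neg_sub, smul_sub, smul_add, smul_neg]
      noncomm_ring
      module
    rw [← hm]
    simp only [Matrix.neg_apply, conjTranspose_apply]
  · intro s i j
    rw [entry', h1 s j i]
    have hm : ((A₀ s * A₁ s * A₂ s - A₂ s * A₁ s * A₀ s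
          + (1/2 : ℂ) • (A₀ s * A₂ s * A₁ s - A₁ s * A₂ s * A₀ s
              + A₁ s * A₀ s * A₂ s - A₂ s * A₀ s * A₁ s))ᴴ)
        = ((-(A₂ s)ᴴ) * (A₁ s)ᴴ * (-(A₀ s)ᴴ) - (-(A₀ s)ᴴ) * (A₁ s)ᴴ * (-(A₂ s)ᴴ)
          + (1/2 : ℂ) • ((-(A₂ s)ᴴ) * (-(A₀ s)ᴴ) * (A₁ s)ᴴ
              - (A₁ s)ᴴ * (-(A₀ s)ᴴ) * (-(A₂ s)ᴴ)
              + (A₁ s)ᴴ * (-(A₂ s)ᴴ) * (-(A₀ s)ᴴ)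
              - (-(A₀ s)ᴴ) * (-(A₂ s)ᴴ) * (A₁ s)ᴴ)) := by
      simp only [conjTranspose_add, conjTranspose_smul, conjTranspose_sub,
        conjTranspose_mul, conjTranspose_pow, star_div₀, star_one, star_ofNat, neg_add, neg_sub, smul_sub, smul_add, smul_neg]
      noncomm_ring
    rw [← hm]
    simp only [Matrix.neg_apply, conjTranspose_apply]
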